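/- If the reaping number 𝔯 equals the continuum 𝔠, then there exists a sequence ⟨y_α⟩_{α<𝔠} of infinite subsets of ω such that for every I ⊆ 𝔠 of cardinality 𝔠 and every infinite x ⊆ ω, there exists α ∈ I such that y_α splits x (i.e., both x ∩ y_α and x \ y_α are infinite). -/
import Mathlib


open Cardinal

/-- `s` splits `t`: both `t ∩ s` and `t \ s` are infinite. -/
def Splits (s t : Set ℕ) : Prop := (t ∩ s).Infinite ∧ (t \ s).Infinite

/-- The reaping number `𝔯`: the least cardinality of a family `A` of infinite subsets
of `ω` such that no single infinite set splits every member of `A`. -/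
noncomputable def reapingNumber : Cardinal.{0} :=
  sInf {c | ∃ A : Set (Set ℕ), (∀ y ∈ A, y.Infinite) ∧
    (∀ x : Set ℕ, x.Infinite → ∃ y ∈ A, ¬ Splits x y) ∧ c = #A}

/-- Families of infinite sets of size less than `𝔯` admit a common splitter. -/
lemma small_family_has_splitter (A : Set (Set ℕ)) (hinf : ∀ y ∈ A, y.Infinite)
    (hA : #A < reapingNumber) :
    ∃ x : Set ℕ, x.Infinite ∧ ∀ y ∈ A, Splits x y := by
  by_contra hcon
  push_neg at hcon
  have : #A ∈ {c | ∃ A : Set (Set ℕ), (∀ y ∈ A, y.Infinite) ∧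
      (∀ x : Set ℕ, x.Infinite → ∃ y ∈ A, ¬ Splits x y) ∧ c = #A} :=
    ⟨A, hinf, fun x hx => hcon x hx, rfl⟩
  exact absurd (csInf_le' this) (not_le.mpr hA)

/-- There are continuum many infinite subsets of `ℕ`. -/
lemma mk_infinite_sets : #{s : Set ℕ // s.Infinite} = Cardinal.continuum := by
  apply le_antisymm
  · calc #{s : Set ℕ // s.Infinite} ≤ #(Set ℕ) := mk_subtype_le _
      _ = Cardinal.continuum := by rw [mk_set, mk_nat]; rfl
  · have : ∀ s : Set ℕ, ((fun n => 2 * n) '' s ∪ {n | n % 2 = 1} : Set ℕ).Infinite := by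
      intro s
      apply Set.Infinite.mono (Set.subset_union_right)
      have : Set.InjOn (fun n => 2 * n + 1) Set.univ := fun a _ b _ hab => by simp only at hab; omega
      have h2 : (fun n => 2 * n + 1) '' Set.univ ⊆ {n | n % 2 = 1} := by
        rintro m ⟨k, _, rfl⟩; simp only [Set.mem_setOf_eq]; omega
      exact Set.Infinite.mono h2 ((Set.infinite_univ).image this)
    have hinj : Function.Injective
        (fun s : Set ℕ => (⟨(fun n => 2 * n) '' s ∪ {n | n % 2 = 1}, this s⟩ :
          {s : Set ℕ // s.Infinite})) := by
      intro s t hst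
      have hst' : ((fun n => 2 * n) '' s ∪ {n | n % 2 = 1} : Set ℕ)
          = (fun n => 2 * n) '' t ∪ {n | n % 2 = 1} := congrArg Subtype.val hst
      have key : ∀ u : Set ℕ, ∀ n, n ∈ u ↔
          2 * n ∈ ((fun n => 2 * n) '' u ∪ {n | n % 2 = 1} : Set ℕ) := by
        intro u n
        constructor
        · intro hn; exact Or.inl ⟨n, hn, rfl⟩
        · rintro (⟨m, hm, hmn⟩ | hodd)
          · simp only at hmn; have : m = n := by omega
            rwa [← this]
          · simp only [Set.mem_setOf_eq] at hodd; omega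
      ext n
      rw [key s n, key t n, hst']
    calc Cardinal.continuum = #(Set ℕ) := by rw [mk_set, mk_nat]; rfl
      _ ≤ #{s : Set ℕ // s.Infinite} := mk_le_of_injective hinj

/-- If `𝔯 = 𝔠`, then there is a sequence `⟨y_α⟩_{α<𝔠}` of infinite subsets of `ω`
such that for every `I ⊆ 𝔠` of size `𝔠` and every infinite `x ⊆ ω`, some `y_α`
with `α ∈ I` splits `x`. -/
theorem reaping_eq_continuum_implies_supersplitting
    (h : reapingNumber = Cardinal.continuum) :
    ∃ (ι : Type) (y : ι → Set ℕ), #ι = Cardinal.continuum ∧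
      (∀ i, (y i).Infinite) ∧
      ∀ I : Set ι, #I = Cardinal.continuum →
        ∀ x : Set ℕ, x.Infinite → ∃ i ∈ I, Splits (y i) x := by
  set ι := Cardinal.continuum.ord.ToType with hι
  have hmkι : #ι = Cardinal.continuum := by
    rw [hι, Cardinal.mk_toType, Cardinal.card_ord]
  -- initial segments are small
  have hIio : ∀ a : ι, #{b : ι | b < a} < Cardinal.continuum := by
    intro a
    exact Cardinal.mk_Iio_ord_toType a
  -- enumeration of infinite sets
  obtain ⟨e⟩ : Nonempty (ι ≃ {s : Set ℕ // s.Infinite}) := by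
    rw [← Cardinal.eq, hmkι, mk_infinite_sets]
  set X : ι → Set ℕ := fun i => (e i).1 with hX
  have hXinf : ∀ i, (X i).Infinite := fun i => (e i).2
  -- choose splitters for initial segments
  have hsplit : ∀ a : ι, ∃ x : Set ℕ, x.Infinite ∧ ∀ y ∈ X '' {b | b ≤ a}, Splits x y := by
    intro a
    apply small_family_has_splitter
    · rintro y ⟨b, _, rfl⟩; exact hXinf b
    · rw [h]
      calc #(X '' {b | b ≤ a}) ≤ #{b : ι | b ≤ a} := mk_image_le
        _ ≤ #({b : ι | b < a} ∪ {a} : Set ι) := by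
            apply mk_le_mk_of_subset
            intro b hb
            rcases lt_or_eq_of_le (show b ≤ a from hb) with h' | h'
            · exact Or.inl h'
            · exact Or.inr h'
        _ ≤ #{b : ι | b < a} + #({a} : Set ι) := mk_union_le _ _
        _ < Cardinal.continuum := by
            apply Cardinal.add_lt_of_lt aleph0_le_continuum (hIio a)
            rw [mk_singleton]
            exact one_lt_aleph0.trans_le aleph0_le_continuum
  choose Y hYinf hYsplit using hsplit
  refine ⟨ι, Y, hmkι, hYinf, ?_⟩
  intro I hI x hx
  obtain ⟨b, hb⟩ : ∃ b, X b = x := ⟨e.symm ⟨x, hx⟩, by simp [hX]⟩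
  have : ∃ a ∈ I, b ≤ a := by
    by_contra hcon
    push_neg at hcon
    have hsub : I ⊆ {c : ι | c < b} := fun c hc => hcon c hc
    have h2 := mk_le_mk_of_subset hsub
    rw [hI] at h2
    exact absurd h2 (not_le.mpr (hIio b))
  obtain ⟨a, haI, hba⟩ := this
  refine ⟨a, haI, ?_⟩
  rw [← hb]
  exact hYsplit a (X b) ⟨b, hba, rfl⟩
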